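/- Let T be a triangulation of P_{n+2}. The 2n edges {k_L,k} and {k,k_R} for k ∈ {1,…,n} are pairwise distinct, none of them equals {0,n+1}, and together with {0,n+1} they comprise all edges of T. Moreover, the left graph T^L (vertex set {0,1,…,n}, edges {k_L,k} for k ∈ {1,…,n}) is a tree, and the right graph T^R (vertex set {1,…,n+1}, edges {k,k_R} for k ∈ {1,…,n}) is a tree. -/

import Mathlib

/-- A triangulation of the convex `(n+2)`-gon with vertices `0, 1, …, n+1` labelled
counterclockwise, encoded as the finite set of its `2n+1` edges `(a,b)` with `a < b`. -/
def IsTriangulation (n : ℕ) (T : Finset (ℕ × ℕ)) : Prop :=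
  (∀ e ∈ T, e.1 < e.2 ∧ e.2 ≤ n + 1) ∧
  (∀ i, i ≤ n → (i, i + 1) ∈ T) ∧
  (0, n + 1) ∈ T ∧
  T.card = 2 * n + 1 ∧
  ∀ e ∈ T, ∀ f ∈ T, ¬(e.1 < f.1 ∧ f.1 < e.2 ∧ e.2 < f.2)

/-- `kL k < k < kR k` is the (unique) triangle of `T` with middle vertex `k`,
for each `k ∈ {1,…,n}`. -/
def MidTriangle (n : ℕ) (T : Finset (ℕ × ℕ)) (kL kR : ℕ → ℕ) : Prop :=
  ∀ k, 1 ≤ k → k ≤ n → kL k < k ∧ k < kR k ∧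
    (kL k, k) ∈ T ∧ (k, kR k) ∈ T ∧ (kL k, kR k) ∈ T

/-- The left graph `T^L` of a triangulation `T`: vertex set `{0,…,n}` (encoded as `Fin (n+1)`,
vertex `a` standing for the polygon vertex `a`), with edges `{kL k, k}` for `k ∈ {1,…,n}`. -/
def leftGraph (n : ℕ) (kL : ℕ → ℕ) : SimpleGraph (Fin (n + 1)) :=
  SimpleGraph.fromRel fun a b => ∃ k, 1 ≤ k ∧ k ≤ n ∧ (a : ℕ) = kL k ∧ (b : ℕ) = k

/-- The right graph `T^R` of a triangulation `T`: vertex set `{1,…,n+1}` (encoded as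
`Fin (n+1)`, vertex `a` standing for the polygon vertex `a+1`), with edges `{k, kR k}`
for `k ∈ {1,…,n}`. -/
def rightGraph (n : ℕ) (kR : ℕ → ℕ) : SimpleGraph (Fin (n + 1)) :=
  SimpleGraph.fromRel fun a b => ∃ k, 1 ≤ k ∧ k ≤ n ∧ (a : ℕ) + 1 = k ∧ (b : ℕ) + 1 = kR k

open SimpleGraph Walk in
/-- A graph on a type, all of whose vertices except a root have a strictly
measure-decreasing neighbour, is connected. -/
lemma my_connected_of_parent {V : Type*} (G : SimpleGraph V) (root : V) (par : V → V)
    (m : V → ℕ)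
    (hpar : ∀ v, v ≠ root → G.Adj v (par v) ∧ m (par v) < m v) : G.Connected := by
  have key : ∀ N v, m v ≤ N → G.Reachable v root := by
    intro N
    induction N with
    | zero =>
      intro v hv
      by_cases h : v = root
      · exact h ▸ SimpleGraph.Reachable.refl _
      · exact absurd (hpar v h).2 (by omega)
    | succ N ih =>
      intro v hv
      by_cases h : v = root
      · exact h ▸ SimpleGraph.Reachable.refl _
      · by_cases h2 : m (par v) ≤ N
        · exact ((hpar v h).1.reachable).trans (ih _ h2)
        · exact absurd (hpar v h).2 (by omega)
  have : Nonempty V := ⟨root⟩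
  exact SimpleGraph.Connected.mk
    (fun u v => (key (m u) u le_rfl).trans (key (m v) v le_rfl).symm)

open SimpleGraph Walk in
/-- A graph in which every vertex has at most one neighbour of smaller measure (and no
neighbour of equal measure) is acyclic. -/
lemma my_acyclic {V : Type*} [DecidableEq V] (G : SimpleGraph V) (m : V → ℕ)
    (hne : ∀ u v, G.Adj u v → m u ≠ m v)
    (huniq : ∀ u v w, G.Adj u v → G.Adj u w → m v < m u → m w < m u → v = w) :
    G.IsAcyclic := by
  intro v c hc
  have hvs : v ∈ c.support := c.start_mem_support
  obtain ⟨u, hu, hmax⟩ := Finset.exists_max_image c.support.toFinset m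
    ⟨v, List.mem_toFinset.mpr hvs⟩
  have hus : u ∈ c.support := List.mem_toFinset.mp hu
  have hmax' : ∀ w ∈ c.support, m w ≤ m u := fun w hw => hmax w (List.mem_toFinset.mpr hw)
  set c' := c.rotate u hus with hc'def
  have hc' : c'.IsCycle := hc.rotate hus
  have hsupp : ∀ w ∈ c'.support, m w ≤ m u := by
    intro w hw
    rcases List.mem_cons.mp ((c'.support_eq_cons) ▸ hw) with rfl | hw'
    · exact le_rfl
    · exact hmax' w (List.mem_of_mem_tail
        (((support_rotate c u hus).perm.mem_iff).mp hw'))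
  clear_value c'
  cases c' with
  | nil => exact hc'.not_of_nil
  | cons hadj p =>
    rename_i x
    have hcyc := (Walk.cons_isCycle_iff p hadj).mp hc'
    have hplen : 0 < p.length := by
      have := hc'.three_le_length
      simp only [Walk.length_cons] at this
      omega
    have hrevnil : ¬ p.reverse.Nil := by
      rw [Walk.not_nil_iff_lt_length, Walk.length_reverse]; exact hplen
    obtain ⟨y, hadj2, q, hq⟩ := Walk.not_nil_iff.mp hrevnil
    have hey : s(u, y) ∈ p.edges := by
      have : s(u, y) ∈ p.reverse.edges := by rw [hq]; simp
      rwa [Walk.edges_reverse, List.mem_reverse] at this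
    have hys : y ∈ p.support := Walk.snd_mem_support_of_mem_edges p hey
    have hxu : m x < m u := by
      have h1 : m x ≤ m u := hsupp x (by simp)
      exact lt_of_le_of_ne h1 (fun h => hne u x hadj h.symm)
    have hyu : m y < m u := by
      have h1 : m y ≤ m u := hsupp y (by simp [Walk.support_cons, hys])
      exact lt_of_le_of_ne h1 (fun h => hne u y hadj2 h.symm)
    have : x = y := huniq u x y hadj hadj2 hxu hyu
    exact hcyc.2 (this ▸ hey)

open Fin.NatCast

/-- The `2n` edges `{kL k, k}` and `{k, kR k}` (`k ∈ {1,…,n}`) are pairwise distinct, none of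
them equals `{0,n+1}`, and together with `{0,n+1}` they comprise all edges of `T`; moreover
the left graph `T^L` and the right graph `T^R` are trees. -/
theorem stmt1 (n : ℕ) (hn : 1 ≤ n) (T : Finset (ℕ × ℕ)) (hT : IsTriangulation n T)
    (kL kR : ℕ → ℕ) (hmid : MidTriangle n T kL kR) :
    (∀ k, 1 ≤ k → k ≤ n → ∀ k', 1 ≤ k' → k' ≤ n →
      (k ≠ k' → (kL k, k) ≠ (kL k', k') ∧ (k, kR k) ≠ (k', kR k')) ∧
      (kL k, k) ≠ (k', kR k')) ∧
    (∀ k, 1 ≤ k → k ≤ n → (kL k, k) ≠ (0, n + 1) ∧ (k, kR k) ≠ (0, n + 1)) ∧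
    T = ((Finset.Icc 1 n).image fun k => (kL k, k)) ∪
        ((Finset.Icc 1 n).image fun k => (k, kR k)) ∪ {(0, n + 1)} ∧
    (leftGraph n kL).IsTree ∧ (rightGraph n kR).IsTree := by
  obtain ⟨hb, hbd, h0T, hcardT, hnc⟩ := hT
  have hkb : ∀ k, 1 ≤ k → k ≤ n → kL k < k ∧ k < kR k ∧ kR k ≤ n + 1 := by
    intro k h1 h2
    obtain ⟨a1, a2, a3, a4, a5⟩ := hmid k h1 h2
    exact ⟨a1, a2, (hb _ a4).2⟩
  have hcross : ∀ k, 1 ≤ k → k ≤ n → ∀ k', 1 ≤ k' → k' ≤ n → ¬(kL k = k' ∧ k = kR k') := by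
    rintro k h1 h2 k' h1' h2' ⟨e1, e2⟩
    obtain ⟨a1, a2, _, _, a5⟩ := hmid k h1 h2
    obtain ⟨b1, b2, _, _, b5⟩ := hmid k' h1' h2'
    exact hnc _ b5 _ a5 ⟨by omega, by omega, by omega⟩
  have part1 : ∀ k, 1 ≤ k → k ≤ n → ∀ k', 1 ≤ k' → k' ≤ n →
      (k ≠ k' → (kL k, k) ≠ (kL k', k') ∧ (k, kR k) ≠ (k', kR k')) ∧
      (kL k, k) ≠ (k', kR k') := by
    intro k h1 h2 k' h1' h2'
    refine ⟨fun hne => ⟨fun h => hne (Prod.ext_iff.mp h).2, fun h => hne (Prod.ext_iff.mp h).1⟩,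
      fun h => hcross k h1 h2 k' h1' h2' ⟨(Prod.ext_iff.mp h).1, (Prod.ext_iff.mp h).2⟩⟩
  have part2 : ∀ k, 1 ≤ k → k ≤ n → (kL k, k) ≠ (0, n + 1) ∧ (k, kR k) ≠ (0, n + 1) := by
    intro k h1 h2
    constructor <;> intro h <;> obtain ⟨e1, e2⟩ := Prod.ext_iff.mp h <;> omega
  refine ⟨part1, part2, ?_, ?_, ?_⟩
  · -- part 3
    set A := (Finset.Icc 1 n).image fun k => (kL k, k) with hA
    set B := (Finset.Icc 1 n).image fun k => (k, kR k) with hB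
    have hAcard : A.card = n := by
      rw [hA, Finset.card_image_of_injOn, Nat.card_Icc]
      · omega
      · intro a _ b _ h
        exact (Prod.ext_iff.mp h).2
    have hBcard : B.card = n := by
      rw [hB, Finset.card_image_of_injOn, Nat.card_Icc]
      · omega
      · intro a _ b _ h
        exact (Prod.ext_iff.mp h).1
    have hABdisj : Disjoint A B := by
      rw [Finset.disjoint_left]
      rintro e heA heB
      simp only [hA, hB, Finset.mem_image, Finset.mem_Icc] at heA heB
      obtain ⟨k, ⟨hk1, hk2⟩, rfl⟩ := heA
      obtain ⟨k', ⟨hk1', hk2'⟩, he⟩ := heB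
      exact hcross k hk1 hk2 k' hk1' hk2'
        ⟨(Prod.ext_iff.mp he).1.symm, (Prod.ext_iff.mp he).2.symm⟩
    have h0notAB : (0, n + 1) ∉ A ∪ B := by
      simp only [Finset.mem_union, hA, hB, Finset.mem_image, Finset.mem_Icc]
      rintro (⟨k, ⟨hk1, hk2⟩, he⟩ | ⟨k, ⟨hk1, hk2⟩, he⟩)
      · exact (part2 k hk1 hk2).1 he
      · exact (part2 k hk1 hk2).2 he
    have hsub : A ∪ B ∪ {(0, n + 1)} ⊆ T := by
      intro e he
      simp only [Finset.mem_union, Finset.mem_singleton, hA, hB, Finset.mem_image,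
        Finset.mem_Icc] at he
      rcases he with (⟨k, ⟨hk1, hk2⟩, rfl⟩ | ⟨k, ⟨hk1, hk2⟩, rfl⟩) | rfl
      · exact (hmid k hk1 hk2).2.2.1
      · exact (hmid k hk1 hk2).2.2.2.1
      · exact h0T
    have hucard : (A ∪ B ∪ {(0, n + 1)}).card = 2 * n + 1 := by
      rw [Finset.card_union_of_disjoint (Finset.disjoint_singleton_right.mpr h0notAB),
        Finset.card_union_of_disjoint hABdisj, hAcard, hBcard, Finset.card_singleton]
      omega
    exact (Finset.eq_of_subset_of_card_le hsub (le_of_eq (by rw [hucard, hcardT]))).symm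
  · -- left graph is a tree
    constructor
    · apply my_connected_of_parent (leftGraph n kL) 0 (fun v => ((kL (v : ℕ) : ℕ) : Fin (n + 1)))
        (fun v => (v : ℕ))
      intro v hv
      have hv1 : 1 ≤ (v : ℕ) := by
        rcases Nat.eq_zero_or_pos (v : ℕ) with h | h
        · exact absurd (Fin.ext (h.trans rfl.symm) : v = 0) hv
        · exact h
      have hvn : (v : ℕ) ≤ n := Fin.is_le v
      have hkl := (hkb (v : ℕ) hv1 hvn).1
      have hcast : (((kL (v : ℕ) : ℕ) : Fin (n + 1)) : ℕ) = kL (v : ℕ) :=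
        Fin.val_cast_of_lt (by omega)
      constructor
      · rw [leftGraph, SimpleGraph.fromRel_adj]
        refine ⟨fun h => ?_, Or.inr ⟨(v : ℕ), hv1, hvn, hcast, rfl⟩⟩
        have := congrArg Fin.val h
        rw [hcast] at this
        omega
      · show (((kL (v : ℕ) : ℕ) : Fin (n + 1)) : ℕ) < (v : ℕ)
        rw [hcast]; exact hkl
    · apply my_acyclic (leftGraph n kL) (fun v => (v : ℕ))
      · intro u v huv
        rw [leftGraph, SimpleGraph.fromRel_adj] at huv
        obtain ⟨hne, h | h⟩ := huv <;> obtain ⟨k, hk1, hk2, ha, hb⟩ := h <;>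
          have := (hkb k hk1 hk2).1 <;> omega
      · intro u v w huv huw hvu hwu
        rw [leftGraph, SimpleGraph.fromRel_adj] at huv huw
        have hv : (v : ℕ) = kL (u : ℕ) := by
          obtain ⟨_, h | h⟩ := huv <;> obtain ⟨k, hk1, hk2, ha, hb⟩ := h
          · have := (hkb k hk1 hk2).1; omega
          · rw [ha, hb]
        have hw : (w : ℕ) = kL (u : ℕ) := by
          obtain ⟨_, h | h⟩ := huw <;> obtain ⟨k, hk1, hk2, ha, hb⟩ := h
          · have := (hkb k hk1 hk2).1; omega
          · rw [ha, hb]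
        exact Fin.ext (hv.trans hw.symm)
  · -- right graph is a tree
    constructor
    · apply my_connected_of_parent (rightGraph n kR) ((n : ℕ) : Fin (n + 1))
        (fun v => ((kR ((v : ℕ) + 1) - 1 : ℕ) : Fin (n + 1))) (fun v => n - (v : ℕ))
      intro v hv
      have hvn : (v : ℕ) < n := by
        have h1 : (v : ℕ) ≤ n := Fin.is_le v
        rcases lt_or_eq_of_le h1 with h | h
        · exact h
        · exact absurd (Fin.ext (by rw [Fin.val_cast_of_lt (by omega), h]) : v = _) hv
      have hk1 : 1 ≤ (v : ℕ) + 1 := by omega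
      have hk2 : (v : ℕ) + 1 ≤ n := by omega
      obtain ⟨_, hlt, hle⟩ := hkb ((v : ℕ) + 1) hk1 hk2
      have hcast : (((kR ((v : ℕ) + 1) - 1 : ℕ) : Fin (n + 1)) : ℕ) = kR ((v : ℕ) + 1) - 1 :=
        Fin.val_cast_of_lt (by omega)
      constructor
      · rw [rightGraph, SimpleGraph.fromRel_adj]
        refine ⟨fun h => ?_, Or.inl ⟨(v : ℕ) + 1, hk1, hk2, rfl, by rw [hcast]; omega⟩⟩
        have := congrArg Fin.val h
        rw [hcast] at this
        omega
      · show n - (((kR ((v : ℕ) + 1) - 1 : ℕ) : Fin (n + 1)) : ℕ) < n - (v : ℕ)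
        rw [hcast]; omega
    · apply my_acyclic (rightGraph n kR) (fun v => n - (v : ℕ))
      · intro u v huv
        rw [rightGraph, SimpleGraph.fromRel_adj] at huv
        have hu := Fin.is_le u
        have hv := Fin.is_le v
        obtain ⟨hne, h | h⟩ := huv <;> obtain ⟨k, hk1, hk2, ha, hb⟩ := h <;>
          have := (hkb k hk1 hk2).2.1 <;> omega
      · intro u v w huv huw hvu hwu
        rw [rightGraph, SimpleGraph.fromRel_adj] at huv huw
        have hu := Fin.is_le u
        have hvle := Fin.is_le v
        have hwle := Fin.is_le w
        have hv : (v : ℕ) + 1 = kR ((u : ℕ) + 1) := by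
          obtain ⟨_, h | h⟩ := huv <;> obtain ⟨k, hk1, hk2, ha, hb⟩ := h
          · subst ha; exact hb
          · have := (hkb k hk1 hk2).2.1; omega
        have hw : (w : ℕ) + 1 = kR ((u : ℕ) + 1) := by
          obtain ⟨_, h | h⟩ := huw <;> obtain ⟨k, hk1, hk2, ha, hb⟩ := h
          · subst ha; exact hb
          · have := (hkb k hk1 hk2).2.1; omega
        exact Fin.ext (by omega)
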